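/- Let i be an agent type and let p ∈ ℝ^X satisfy p_x ≠ b_i for every x ∈ X. Then the demand correspondence D_i has a closed graph at p: for every sequence (q^k) in ℝ^X with q^k → p and every sequence (d^k) with d^k ∈ D_i(q^k) for all k and d^k → d in ℝ^X, one has d ∈ D_i(p). -/
import Mathlib


open MeasureTheory Pointwise

/-- The standard basis vector `e_x` in `ℝ^X`. -/
def basisVec {X : Type*} [DecidableEq X] (x : X) : X → ℝ := fun y => if y = x then 1 else 0

/-- The demand correspondence `D_i(q)`: cheapest most-preferred affordable objects
(as basis vectors), or `{0}` when nothing is affordable. -/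
def Demand {X : Type*} [DecidableEq X] (pref : X → X → Prop) (b : ℝ) (q : X → ℝ) :
    Set (X → ℝ) :=
  {d | (∃ x, q x ≤ b ∧ d = basisVec x ∧
          (∀ y, q y ≤ b → pref x y) ∧
          (∀ y, q y ≤ b → (∀ z, q z ≤ b → pref y z) → q x ≤ q y)) ∨
       ((¬ ∃ x, q x ≤ b) ∧ d = 0)}

/-- Lottery demand: the Aumann integral of the demand correspondence over the
price shock with law `G`. -/
def Lottery {X : Type*} [Fintype X] [DecidableEq X] (pref : X → X → Prop) (b : ℝ)
    (G : Measure (X → ℝ)) (p : X → ℝ) : Set (X → ℝ) :=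
  {a | ∃ g : (X → ℝ) → (X → ℝ), Measurable g ∧
        (∀ᵐ ξ ∂G, g ξ ∈ Demand pref b (p + ξ)) ∧ a = ∫ ξ, g ξ ∂G}

/-- Assumption 1: each coordinate of the price shock is atomless, mean-zero,
and almost surely bounded in `[ξlo, ξhi]`. -/
def Assumption1 {X : Type*} [Fintype X] (G : Measure (X → ℝ)) (ξlo ξhi : ℝ) : Prop :=
  ∀ x : X, (∀ r : ℝ, G {ξ | ξ x = r} = 0) ∧ (∫ ξ, ξ x ∂G) = 0 ∧
    (∀ᵐ ξ ∂G, ξlo ≤ ξ x ∧ ξ x ≤ ξhi)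

open Classical in
/-- `a'` stochastically dominates `a` with respect to the preference `pref`. -/
noncomputable def StochDom {X : Type*} [Fintype X] (pref : X → X → Prop)
    (a' a : X → ℝ) : Prop :=
  ∀ x : X, ∑ y ∈ Finset.univ.filter (fun y => pref y x), a y ≤
    ∑ y ∈ Finset.univ.filter (fun y => pref y x), a' y

open Classical in
/-- Strict stochastic dominance. -/
noncomputable def StrictStochDom {X : Type*} [Fintype X] (pref : X → X → Prop)
    (a' a : X → ℝ) : Prop :=
  StochDom pref a' a ∧
    ∃ x : X, ∑ y ∈ Finset.univ.filter (fun y => pref y x), a y <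
      ∑ y ∈ Finset.univ.filter (fun y => pref y x), a' y

open Filter Topology

/-- Claim 1 of Theorem 1: away from the budget boundary, the demand
correspondence has a closed graph. -/
theorem demand_closed_graph
    {X : Type*} [Fintype X] [DecidableEq X]
    (pref : X → X → Prop)
    (hcomplete : ∀ x y, pref x y ∨ pref y x)
    (htrans : Transitive pref)
    (bi : ℝ) (hbi : 0 < bi)
    (p : X → ℝ) (hbdry : ∀ x, p x ≠ bi)
    (q : ℕ → X → ℝ) (hq : Tendsto q atTop (𝓝 p))
    (d : ℕ → X → ℝ) (hd : ∀ k, d k ∈ Demand pref bi (q k))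
    (dlim : X → ℝ) (hdlim : Tendsto d atTop (𝓝 dlim)) :
    dlim ∈ Demand pref bi p := by
  -- coordinatewise convergence of prices
  have hqx : ∀ x, Tendsto (fun k => q k x) atTop (𝓝 (p x)) := tendsto_pi_nhds.mp hq
  -- eventually the affordable sets coincide
  have hEv : ∀ᶠ k in atTop, ∀ x, (q k x ≤ bi ↔ p x ≤ bi) := by
    rw [eventually_all]
    intro x
    rcases lt_or_gt_of_ne (hbdry x) with h | h
    · filter_upwards [(hqx x).eventually_lt_const h] with k hk
      constructor <;> intro _ <;> [exact h.le; exact hk.le]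
    · filter_upwards [(hqx x).eventually_const_lt h] with k hk
      constructor <;> intro h' <;> [exact absurd h' (not_le.mpr hk); exact absurd h' (not_le.mpr h)]
  by_cases hA : ∃ x, p x ≤ bi
  · obtain ⟨x0, hx0⟩ := hA
    -- eventually the left disjunct of the demand holds; extract witnesses
    classical
    set P : ℕ → Prop := fun k => ∃ x, q k x ≤ bi ∧ d k = basisVec x ∧
        (∀ y, q k y ≤ bi → pref x y) ∧
        (∀ y, q k y ≤ bi → (∀ z, q k z ≤ bi → pref y z) → q k x ≤ q k y) with hPdef
    have hEvP : ∀ᶠ k in atTop, P k := by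
      filter_upwards [hEv] with k hk
      rcases hd k with h | ⟨hne, _⟩
      · exact h
      · exact absurd ⟨x0, (hk x0).mpr hx0⟩ hne
    let xk : ℕ → X := fun k => if h : P k then h.choose else x0
    have hxk : ∀ k, P k → q k (xk k) ≤ bi ∧ d k = basisVec (xk k) ∧
        (∀ y, q k y ≤ bi → pref (xk k) y) ∧
        (∀ y, q k y ≤ bi → (∀ z, q k z ≤ bi → pref y z) → q k (xk k) ≤ q k y) := by
      intro k hk
      simp only [xk, dif_pos hk]
      exact hk.choose_spec
    -- pigeonhole: some x* is chosen infinitely often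
    obtain ⟨xs, hxs⟩ := Finite.exists_infinite_fiber xk
    have hF : ∃ᶠ k in atTop, xk k = xs := by
      rw [Nat.frequently_atTop_iff_infinite]
      exact Set.infinite_coe_iff.mp hxs
    have hFall : ∃ᶠ k in atTop, xk k = xs ∧ P k ∧ (∀ x, (q k x ≤ bi ↔ p x ≤ bi)) :=
      hF.and_eventually (hEvP.and hEv)
    -- the limit is basisVec xs
    have hdlim_eq : dlim = basisVec xs := by
      have hfreq : ∃ᶠ k in atTop, d k ∈ ({basisVec xs} : Set (X → ℝ)) := by
        refine hFall.mono ?_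
        rintro k ⟨hks, hPk, _⟩
        have := (hxk k hPk).2.1
        rw [hks] at this
        simpa using this
      have := mem_closure_of_frequently_of_tendsto hfreq hdlim
      rwa [closure_singleton, Set.mem_singleton_iff] at this
    refine Or.inl ⟨xs, ?_, hdlim_eq, ?_, ?_⟩
    · -- xs affordable at p
      obtain ⟨k, hks, hPk, hiff⟩ := hFall.exists
      have := (hxk k hPk).1
      rw [hks] at this
      exact (hiff xs).mp this
    · -- xs maximal
      intro y hy
      obtain ⟨k, hks, hPk, hiff⟩ := hFall.exists
      have := (hxk k hPk).2.2.1 y ((hiff y).mpr hy)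
      rwa [hks] at this
    · -- price minimality
      intro y hy hymax
      by_contra hlt
      push_neg at hlt
      have hsub : Tendsto (fun k => q k xs - q k y) atTop (𝓝 (p xs - p y)) :=
        (hqx xs).sub (hqx y)
      have hevpos : ∀ᶠ k in atTop, 0 < q k xs - q k y :=
        hsub.eventually_const_lt (by linarith)
      obtain ⟨k, ⟨hks, hPk, hiff⟩, hpos⟩ := (hFall.and_eventually hevpos).exists
      have hle : q k (xk k) ≤ q k y := by
        refine (hxk k hPk).2.2.2 y ((hiff y).mpr hy) ?_
        intro z hz
        exact hymax z ((hiff z).mp hz)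
      rw [hks] at hle
      linarith
  · -- nothing affordable at p: eventually nothing affordable at q k, d k = 0
    have hEv0 : ∀ᶠ k in atTop, d k = 0 := by
      filter_upwards [hEv] with k hk
      rcases hd k with ⟨x, hx, _⟩ | ⟨_, h0⟩
      · exact absurd ⟨x, (hk x).mp hx⟩ hA
      · exact h0
    have : Tendsto d atTop (𝓝 (0 : X → ℝ)) :=
      Tendsto.congr' (hEv0.mono fun k hk => hk.symm) tendsto_const_nhds
    exact Or.inr ⟨hA, tendsto_nhds_unique hdlim this⟩
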